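/- Let 𝒫 = { P : {1,2,3}³ → ℝ : P_{ijk} = P_{jik} for all i,j,k and Σ_i P_{iik} = 0 for all k }, and for L₁, L₂, L₃ ∈ ℝ define f(P) = (L₁/2) Σ_{i,j,k} P_{ijk}² + (L₂/2) Σ_{i,j,k} P_{ikj} P_{ijk} + (L₃/2) Σ_{i,j,k} P_{ijj} P_{ikk}. Then there exists μ₀ > 0 such that f(P) ≥ μ₀ Σ_{i,j,k} P_{ijk}² for every P ∈ 𝒫 if and only if L₁ + L₂ > 0, 2L₁ − L₂ > 0, and L₁ + L₂/6 + (5/3)L₃ > 0. -/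

import Mathlib

open Finset
set_option maxHeartbeats 2000000

private lemma aux_coercive (L1 L2 L3 mu : ℝ)
    (h1 : 2*mu ≤ L1 + L2) (h2 : 4*mu ≤ 2*L1 - L2) (h3 : 2*mu ≤ L1 + L2/6 + (5/3)*L3)
    (a0 a1 a2 b0 b1 b2 c0 c1 c2 d0 d1 d2 e0 e1 e2 : ℝ) :
    mu * (2*a0*a0 + 2*a0*d0 + 2*a1*a1 + 2*a1*d1 + 2*a2*a2 + 2*a2*d2 + 2*b0*b0 + 2*b1*b1 + 2*b2*b2 + 2*c0*c0 + 2*c1*c1 + 2*c2*c2 + 2*d0*d0 + 2*d1*d1 + 2*d2*d2 + 2*e0*e0 + 2*e1*e1 + 2*e2*e2) ≤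
      (L1/2) * (2*a0*a0 + 2*a0*d0 + 2*a1*a1 + 2*a1*d1 + 2*a2*a2 + 2*a2*d2 + 2*b0*b0 + 2*b1*b1 + 2*b2*b2 + 2*c0*c0 + 2*c1*c1 + 2*c2*c2 + 2*d0*d0 + 2*d1*d1 + 2*d2*d2 + 2*e0*e0 + 2*e1*e1 + 2*e2*e2) + (L2/2) * (a0*a0 + (-2)*a0*c2 + 2*a1*b0 + (-2)*a1*e2 + a2*a2 + 2*a2*c0 + 2*a2*d2 + b0*b0 + b1*b1 + 2*b1*d0 + 2*b2*c1 + 2*b2*e0 + c0*c0 + 2*c1*e0 + c2*c2 + (-2)*c2*d0 + d1*d1 + (-2)*d1*e2 + d2*d2 + 2*d2*e1 + e1*e1 + e2*e2) + (L3/2) * (a0*a0 + 2*a0*b1 + 2*a0*c2 + a2*a2 + (-2)*a2*c0 + 2*a2*d2 + (-2)*a2*e1 + b0*b0 + 2*b0*d1 + 2*b0*e2 + b1*b1 + 2*b1*c2 + c0*c0 + (-2)*c0*d2 + 2*c0*e1 + c2*c2 + d1*d1 + 2*d1*e2 + d2*d2 + (-2)*d2*e1 + e1*e1 + e2*e2)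 := by
  have hn1 : (0:ℝ) ≤ ((2/5)*a0 + (2/5)*b1 + (2/5)*c2)^2 + ((-1/5)*b0 + (-1/5)*d1 + (-1/5)*e2)^2 + ((1/5)*a2 + (-1/5)*c0 + (1/5)*d2 + (-1/5)*e1)^2 + ((3/10)*b0 + (3/10)*d1 + (3/10)*e2)^2 + ((3/10)*a0 + (3/10)*b1 + (3/10)*c2)^2 + ((-3/10)*a2 + (3/10)*c0 + (-3/10)*d2 + (3/10)*e1)^2 + ((3/10)*a0 + (3/10)*b1 + (3/10)*c2)^2 + ((3/10)*b0 + (3/10)*d1 + (3/10)*e2)^2 + ((3/10)*a0 + (3/10)*b1 + (3/10)*c2)^2 + ((-1/5)*a0 + (-1/5)*b1 + (-1/5)*c2)^2 + ((2/5)*b0 + (2/5)*d1 + (2/5)*e2)^2 + ((1/5)*a2 + (-1/5)*c0 + (1/5)*d2 + (-1/5)*e1)^2 + ((-3/10)*a2 + (3/10)*c0 + (-3/10)*d2 + (3/10)*e1)^2 + ((3/10)*b0 + (3/10)*d1 + (3/10)*e2)^2 + ((-3/10)*a2 + (3/10)*c0 + (-3/10)*d2 + (3/10)*e1)^2 + ((3/10)*a0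 + (3/10)*b1 + (3/10)*c2)^2 + ((-3/10)*a2 + (3/10)*c0 + (-3/10)*d2 + (3/10)*e1)^2 + ((3/10)*b0 + (3/10)*d1 + (3/10)*e2)^2 + ((-1/5)*a0 + (-1/5)*b1 + (-1/5)*c2)^2 + ((-1/5)*b0 + (-1/5)*d1 + (-1/5)*e2)^2 + ((-2/5)*a2 + (2/5)*c0 + (-2/5)*d2 + (2/5)*e1)^2 := by positivity
  have hn2 : (0:ℝ) ≤ ((2/3)*a1 + (-1/3)*b0 + (1/3)*d1 + (1/3)*e2)^2 + ((1/3)*a2 + (-1/3)*c0 + (-1/3)*d2 + (1/3)*e1)^2 + ((-1/3)*a1 + (1/6)*b0 + (-1/6)*d1 + (-1/6)*e2)^2 + ((-1/6)*a0 + (1/6)*b1 + (-1/6)*c2 + (-1/3)*d0)^2 + ((2/3)*b2 + (-1/3)*c1 + (-1/3)*e0)^2 + ((-1/6)*a2 + (1/6)*c0 + (1/6)*d2 + (-1/6)*e1)^2 + ((-1/3)*b2 + (2/3)*c1 + (-1/3)*e0)^2 + ((1/6)*a0 + (-1/6)*b1 + (1/6)*c2 + (1/3)*d0)^2 + ((-1/3)*a1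 + (1/6)*b0 + (-1/6)*d1 + (-1/6)*e2)^2 + ((-1/6)*a0 + (1/6)*b1 + (-1/6)*c2 + (-1/3)*d0)^2 + ((2/3)*b2 + (-1/3)*c1 + (-1/3)*e0)^2 + ((1/3)*a0 + (-1/3)*b1 + (1/3)*c2 + (2/3)*d0)^2 + ((-1/3)*a2 + (1/3)*c0 + (1/3)*d2 + (-1/3)*e1)^2 + ((-1/3)*b2 + (-1/3)*c1 + (2/3)*e0)^2 + ((1/6)*a2 + (-1/6)*c0 + (-1/6)*d2 + (1/6)*e1)^2 + ((1/3)*a1 + (-1/6)*b0 + (1/6)*d1 + (1/6)*e2)^2 + ((-1/6)*a2 + (1/6)*c0 + (1/6)*d2 + (-1/6)*e1)^2 + ((-1/3)*b2 + (2/3)*c1 + (-1/3)*e0)^2 + ((1/6)*a0 + (-1/6)*b1 + (1/6)*c2 + (1/3)*d0)^2 + ((-1/3)*b2 + (-1/3)*c1 + (2/3)*e0)^2 + ((1/6)*a2 + (-1/6)*c0 + (-1/6)*d2 + (1/6)*e1)^2 + ((1/3)*a1 + (-1/6)*b0 + (1/6)*d1 + (1/6)*e2)^2 + ((-1/3)*a0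 + (1/3)*b1 + (-1/3)*c2 + (-2/3)*d0)^2 + ((-2/3)*a1 + (1/3)*b0 + (-1/3)*d1 + (-1/3)*e2)^2 := by positivity
  have hn3 : (0:ℝ) ≤ ((3/5)*a0 + (-2/5)*b1 + (-2/5)*c2)^2 + ((1/3)*a1 + (8/15)*b0 + (-2/15)*d1 + (-2/15)*e2)^2 + ((7/15)*a2 + (8/15)*c0 + (2/15)*d2 + (-2/15)*e1)^2 + ((1/3)*a1 + (8/15)*b0 + (-2/15)*d1 + (-2/15)*e2)^2 + ((-2/15)*a0 + (8/15)*b1 + (-2/15)*c2 + (1/3)*d0)^2 + ((1/3)*b2 + (1/3)*c1 + (1/3)*e0)^2 + ((7/15)*a2 + (8/15)*c0 + (2/15)*d2 + (-2/15)*e1)^2 + ((1/3)*b2 + (1/3)*c1 + (1/3)*e0)^2 + ((-7/15)*a0 + (-2/15)*b1 + (8/15)*c2 + (-1/3)*d0)^2 + ((1/3)*a1 + (8/15)*b0 + (-2/15)*d1 + (-2/15)*e2)^2 + ((-2/15)*a0 + (8/15)*b1 + (-2/15)*c2 + (1/3)*d0)^2 + ((1/3)*b2 + (1/3)*c1 +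 (1/3)*e0)^2 + ((-2/15)*a0 + (8/15)*b1 + (-2/15)*c2 + (1/3)*d0)^2 + ((-2/5)*b0 + (3/5)*d1 + (-2/5)*e2)^2 + ((2/15)*a2 + (-2/15)*c0 + (7/15)*d2 + (8/15)*e1)^2 + ((1/3)*b2 + (1/3)*c1 + (1/3)*e0)^2 + ((2/15)*a2 + (-2/15)*c0 + (7/15)*d2 + (8/15)*e1)^2 + ((-1/3)*a1 + (-2/15)*b0 + (-7/15)*d1 + (8/15)*e2)^2 + ((7/15)*a2 + (8/15)*c0 + (2/15)*d2 + (-2/15)*e1)^2 + ((1/3)*b2 + (1/3)*c1 + (1/3)*e0)^2 + ((-7/15)*a0 + (-2/15)*b1 + (8/15)*c2 + (-1/3)*d0)^2 + ((1/3)*b2 + (1/3)*c1 + (1/3)*e0)^2 + ((2/15)*a2 + (-2/15)*c0 + (7/15)*d2 + (8/15)*e1)^2 + ((-1/3)*a1 + (-2/15)*b0 + (-7/15)*d1 + (8/15)*e2)^2 + ((-7/15)*a0 + (-2/15)*b1 + (8/15)*c2 + (-1/3)*d0)^2 + ((-1/3)*a1 + (-2/15)*b0 + (-7/15)*d1 +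 (8/15)*e2)^2 + ((-3/5)*a2 + (-2/5)*c0 + (-3/5)*d2 + (-2/5)*e1)^2 := by positivity
  have key : (L1/2) * (2*a0*a0 + 2*a0*d0 + 2*a1*a1 + 2*a1*d1 + 2*a2*a2 + 2*a2*d2 + 2*b0*b0 + 2*b1*b1 + 2*b2*b2 + 2*c0*c0 + 2*c1*c1 + 2*c2*c2 + 2*d0*d0 + 2*d1*d1 + 2*d2*d2 + 2*e0*e0 + 2*e1*e1 + 2*e2*e2) + (L2/2) * (a0*a0 + (-2)*a0*c2 + 2*a1*b0 + (-2)*a1*e2 + a2*a2 + 2*a2*c0 + 2*a2*d2 + b0*b0 + b1*b1 + 2*b1*d0 + 2*b2*c1 + 2*b2*e0 + c0*c0 + 2*c1*e0 + c2*c2 + (-2)*c2*d0 + d1*d1 + (-2)*d1*e2 + d2*d2 + 2*d2*e1 + e1*e1 + e2*e2) + (L3/2) * (a0*a0 + 2*a0*b1 + 2*a0*c2 + a2*a2 + (-2)*a2*c0 + 2*a2*d2 + (-2)*a2*e1 + b0*b0 + 2*b0*d1 + 2*b0*e2 + b1*b1 + 2*b1*c2 + c0*c0 + (-2)*c0*d2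 + 2*c0*e1 + c2*c2 + d1*d1 + 2*d1*e2 + d2*d2 + (-2)*d2*e1 + e1*e1 + e2*e2) - mu * (2*a0*a0 + 2*a0*d0 + 2*a1*a1 + 2*a1*d1 + 2*a2*a2 + 2*a2*d2 + 2*b0*b0 + 2*b1*b1 + 2*b2*b2 + 2*c0*c0 + 2*c1*c1 + 2*c2*c2 + 2*d0*d0 + 2*d1*d1 + 2*d2*d2 + 2*e0*e0 + 2*e1*e1 + 2*e2*e2)
      = ((L1 + L2/6 + (5/3)*L3)/2 - mu) * (((2/5)*a0 + (2/5)*b1 + (2/5)*c2)^2 + ((-1/5)*b0 + (-1/5)*d1 + (-1/5)*e2)^2 + ((1/5)*a2 + (-1/5)*c0 + (1/5)*d2 + (-1/5)*e1)^2 + ((3/10)*b0 + (3/10)*d1 + (3/10)*e2)^2 + ((3/10)*a0 + (3/10)*b1 + (3/10)*c2)^2 + ((-3/10)*a2 + (3/10)*c0 + (-3/10)*d2 + (3/10)*e1)^2 + ((3/10)*a0 + (3/10)*b1 + (3/10)*c2)^2 + ((3/10)*b0 + (3/10)*d1 + (3/10)*e2)^2 + ((3/10)*a0 + (3/10)*b1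 + (3/10)*c2)^2 + ((-1/5)*a0 + (-1/5)*b1 + (-1/5)*c2)^2 + ((2/5)*b0 + (2/5)*d1 + (2/5)*e2)^2 + ((1/5)*a2 + (-1/5)*c0 + (1/5)*d2 + (-1/5)*e1)^2 + ((-3/10)*a2 + (3/10)*c0 + (-3/10)*d2 + (3/10)*e1)^2 + ((3/10)*b0 + (3/10)*d1 + (3/10)*e2)^2 + ((-3/10)*a2 + (3/10)*c0 + (-3/10)*d2 + (3/10)*e1)^2 + ((3/10)*a0 + (3/10)*b1 + (3/10)*c2)^2 + ((-3/10)*a2 + (3/10)*c0 + (-3/10)*d2 + (3/10)*e1)^2 + ((3/10)*b0 + (3/10)*d1 + (3/10)*e2)^2 + ((-1/5)*a0 + (-1/5)*b1 + (-1/5)*c2)^2 + ((-1/5)*b0 + (-1/5)*d1 + (-1/5)*e2)^2 + ((-2/5)*a2 + (2/5)*c0 + (-2/5)*d2 + (2/5)*e1)^2)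
        + ((2*L1 - L2)/4 - mu) * (((2/3)*a1 + (-1/3)*b0 + (1/3)*d1 + (1/3)*e2)^2 + ((1/3)*a2 + (-1/3)*c0 + (-1/3)*d2 + (1/3)*e1)^2 + ((-1/3)*a1 + (1/6)*b0 + (-1/6)*d1 + (-1/6)*e2)^2 + ((-1/6)*a0 + (1/6)*b1 + (-1/6)*c2 + (-1/3)*d0)^2 + ((2/3)*b2 + (-1/3)*c1 + (-1/3)*e0)^2 + ((-1/6)*a2 + (1/6)*c0 + (1/6)*d2 + (-1/6)*e1)^2 + ((-1/3)*b2 + (2/3)*c1 + (-1/3)*e0)^2 + ((1/6)*a0 + (-1/6)*b1 + (1/6)*c2 + (1/3)*d0)^2 + ((-1/3)*a1 + (1/6)*b0 + (-1/6)*d1 + (-1/6)*e2)^2 + ((-1/6)*a0 + (1/6)*b1 + (-1/6)*c2 + (-1/3)*d0)^2 + ((2/3)*b2 + (-1/3)*c1 + (-1/3)*e0)^2 + ((1/3)*a0 + (-1/3)*b1 + (1/3)*c2 + (2/3)*d0)^2 + ((-1/3)*a2 + (1/3)*c0 + (1/3)*d2 + (-1/3)*e1)^2 + ((-1/3)*b2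 + (-1/3)*c1 + (2/3)*e0)^2 + ((1/6)*a2 + (-1/6)*c0 + (-1/6)*d2 + (1/6)*e1)^2 + ((1/3)*a1 + (-1/6)*b0 + (1/6)*d1 + (1/6)*e2)^2 + ((-1/6)*a2 + (1/6)*c0 + (1/6)*d2 + (-1/6)*e1)^2 + ((-1/3)*b2 + (2/3)*c1 + (-1/3)*e0)^2 + ((1/6)*a0 + (-1/6)*b1 + (1/6)*c2 + (1/3)*d0)^2 + ((-1/3)*b2 + (-1/3)*c1 + (2/3)*e0)^2 + ((1/6)*a2 + (-1/6)*c0 + (-1/6)*d2 + (1/6)*e1)^2 + ((1/3)*a1 + (-1/6)*b0 + (1/6)*d1 + (1/6)*e2)^2 + ((-1/3)*a0 + (1/3)*b1 + (-1/3)*c2 + (-2/3)*d0)^2 + ((-2/3)*a1 + (1/3)*b0 + (-1/3)*d1 + (-1/3)*e2)^2)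
        + ((L1 + L2)/2 - mu) * (((3/5)*a0 + (-2/5)*b1 + (-2/5)*c2)^2 + ((1/3)*a1 + (8/15)*b0 + (-2/15)*d1 + (-2/15)*e2)^2 + ((7/15)*a2 + (8/15)*c0 + (2/15)*d2 + (-2/15)*e1)^2 + ((1/3)*a1 + (8/15)*b0 + (-2/15)*d1 + (-2/15)*e2)^2 + ((-2/15)*a0 + (8/15)*b1 + (-2/15)*c2 + (1/3)*d0)^2 + ((1/3)*b2 + (1/3)*c1 + (1/3)*e0)^2 + ((7/15)*a2 + (8/15)*c0 + (2/15)*d2 + (-2/15)*e1)^2 + ((1/3)*b2 + (1/3)*c1 + (1/3)*e0)^2 + ((-7/15)*a0 + (-2/15)*b1 + (8/15)*c2 + (-1/3)*d0)^2 + ((1/3)*a1 + (8/15)*b0 + (-2/15)*d1 + (-2/15)*e2)^2 + ((-2/15)*a0 + (8/15)*b1 + (-2/15)*c2 + (1/3)*d0)^2 + ((1/3)*b2 + (1/3)*c1 + (1/3)*e0)^2 + ((-2/15)*a0 + (8/15)*b1 + (-2/15)*c2 + (1/3)*d0)^2 + ((-2/5)*b0 + (3/5)*d1 + (-2/5)*e2)^2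 + ((2/15)*a2 + (-2/15)*c0 + (7/15)*d2 + (8/15)*e1)^2 + ((1/3)*b2 + (1/3)*c1 + (1/3)*e0)^2 + ((2/15)*a2 + (-2/15)*c0 + (7/15)*d2 + (8/15)*e1)^2 + ((-1/3)*a1 + (-2/15)*b0 + (-7/15)*d1 + (8/15)*e2)^2 + ((7/15)*a2 + (8/15)*c0 + (2/15)*d2 + (-2/15)*e1)^2 + ((1/3)*b2 + (1/3)*c1 + (1/3)*e0)^2 + ((-7/15)*a0 + (-2/15)*b1 + (8/15)*c2 + (-1/3)*d0)^2 + ((1/3)*b2 + (1/3)*c1 + (1/3)*e0)^2 + ((2/15)*a2 + (-2/15)*c0 + (7/15)*d2 + (8/15)*e1)^2 + ((-1/3)*a1 + (-2/15)*b0 + (-7/15)*d1 + (8/15)*e2)^2 + ((-7/15)*a0 + (-2/15)*b1 + (8/15)*c2 + (-1/3)*d0)^2 + ((-1/3)*a1 + (-2/15)*b0 + (-7/15)*d1 + (8/15)*e2)^2 + ((-3/5)*a2 + (-2/5)*c0 + (-3/5)*d2 + (-2/5)*e1)^2) := by ring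
  linarith [key,
    mul_nonneg (by linarith : (0:ℝ) ≤ (L1 + L2/6 + (5/3)*L3)/2 - mu) hn1,
             mul_nonneg (by linarith : (0:ℝ) ≤ (2*L1 - L2)/4 - mu) hn2,
             mul_nonneg (by linarith : (0:ℝ) ≤ (L1 + L2)/2 - mu) hn3]

private def tP1 : Fin 3 → Fin 3 → Fin 3 → ℝ :=
  ![![![0,0,0],![0,0,1],![0,1,0]],
    ![![0,0,1],![0,0,0],![1,0,0]],
    ![![0,1,0],![1,0,0],![0,0,0]]]

private def tP2 : Fin 3 → Fin 3 → Fin 3 → ℝ :=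
  ![![![0,0,-2],![0,0,0],![1,0,0]],
    ![![0,0,0],![0,0,2],![0,-1,0]],
    ![![1,0,0],![0,-1,0],![0,0,0]]]

private def tP3 : Fin 3 → Fin 3 → Fin 3 → ℝ :=
  ![![![4,0,0],![0,3,0],![0,0,3]],
    ![![0,3,0],![-2,0,0],![0,0,0]],
    ![![0,0,3],![0,0,0],![-2,0,0]]]

/-- Coercivity of the Landau–de Gennes elastic energy density on the
space `𝒫` of third-order tensors symmetric and traceless in the first two indices:
`f(P) ≥ μ₀ Σ P_{ijk}²` for some `μ₀ > 0` iff `L₁ + L₂ > 0`, `2L₁ − L₂ > 0` and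
`L₁ + L₂/6 + (5/3)L₃ > 0`. -/
theorem elastic_coercivity_iff (L1 L2 L3 : ℝ) :
    (∃ μ0 : ℝ, 0 < μ0 ∧
      ∀ P : Fin 3 → Fin 3 → Fin 3 → ℝ,
        (∀ i j k : Fin 3, P i j k = P j i k) →
        (∀ k : Fin 3, ∑ i : Fin 3, P i i k = 0) →
        μ0 * (∑ i : Fin 3, ∑ j : Fin 3, ∑ k : Fin 3, (P i j k)^2) ≤
          (L1/2) * (∑ i : Fin 3, ∑ j : Fin 3, ∑ k : Fin 3, (P i j k)^2)
          + (L2/2) * (∑ i : Fin 3, ∑ j : Fin 3, ∑ k : Fin 3, P i k j * P i j k)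
          + (L3/2) * (∑ i : Fin 3, ∑ j : Fin 3, ∑ k : Fin 3, P i j j * P i k k)) ↔
    (0 < L1 + L2 ∧ 0 < 2 * L1 - L2 ∧ 0 < L1 + L2/6 + (5/3) * L3) := by
  constructor
  · rintro ⟨mu, hmu, h⟩
    have h1 := h tP1 (by intro i j k; fin_cases i <;> fin_cases j <;> fin_cases k <;> rfl)
      (by intro k; fin_cases k <;>
        norm_num [Fin.sum_univ_three, tP1, Matrix.vecHead, Matrix.vecTail,
          Matrix.cons_val_zero, Matrix.cons_val_one, Matrix.cons_val_two])
    have h2 := h tP2 (by intro i j k; fin_cases i <;> fin_cases j <;> fin_cases k <;> rfl)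
      (by intro k; fin_cases k <;>
        norm_num [Fin.sum_univ_three, tP2, Matrix.vecHead, Matrix.vecTail,
          Matrix.cons_val_zero, Matrix.cons_val_one, Matrix.cons_val_two])
    have h3 := h tP3 (by intro i j k; fin_cases i <;> fin_cases j <;> fin_cases k <;> rfl)
      (by intro k; fin_cases k <;>
        norm_num [Fin.sum_univ_three, tP3, Matrix.vecHead, Matrix.vecTail,
          Matrix.cons_val_zero, Matrix.cons_val_one, Matrix.cons_val_two])
    simp only [Fin.sum_univ_three, tP1] at h1
    simp only [Fin.sum_univ_three, tP2] at h2
    simp only [Fin.sum_univ_three, tP3] at h3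
    norm_num [Matrix.cons_val_zero, Matrix.cons_val_one, Matrix.cons_val_two,
      Matrix.head_cons, Matrix.tail_cons, Matrix.vecHead, Matrix.vecTail] at h1 h2 h3
    refine ⟨by linarith, by linarith, by linarith⟩
  · rintro ⟨h1, h2, h3⟩
    refine ⟨min (min ((L1+L2)/2) ((2*L1-L2)/4)) ((L1 + L2/6 + (5/3)*L3)/2),
      lt_min (lt_min (by linarith) (by linarith)) (by linarith), ?_⟩
    set mu := min (min ((L1+L2)/2) ((2*L1-L2)/4)) ((L1 + L2/6 + (5/3)*L3)/2) with hmu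
    intro P hsym htr
    have m1 : mu ≤ (L1+L2)/2 := le_trans (min_le_left _ _) (min_le_left _ _)
    have m2 : mu ≤ (2*L1-L2)/4 := le_trans (min_le_left _ _) (min_le_right _ _)
    have m3 : mu ≤ (L1 + L2/6 + (5/3)*L3)/2 := min_le_right _ _
    have e10 : ∀ k, P 1 0 k = P 0 1 k := fun k => hsym 1 0 k
    have e20 : ∀ k, P 2 0 k = P 0 2 k := fun k => hsym 2 0 k
    have e21 : ∀ k, P 2 1 k = P 1 2 k := fun k => hsym 2 1 k
    have e22 : ∀ k, P 2 2 k = -(P 0 0 k) - P 1 1 k := by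
      intro k
      have := htr k
      simp only [Fin.sum_univ_three] at this
      linarith
    have key := aux_coercive L1 L2 L3 mu (by linarith) (by linarith) (by linarith)
      (P 0 0 0) (P 0 0 1) (P 0 0 2) (P 0 1 0) (P 0 1 1) (P 0 1 2)
      (P 0 2 0) (P 0 2 1) (P 0 2 2) (P 1 1 0) (P 1 1 1) (P 1 1 2)
      (P 1 2 0) (P 1 2 1) (P 1 2 2)
    simp only [Fin.sum_univ_three, e10, e20, e21, e22]
    linarith [key]
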